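/- (Finite-support sufficiency.) Suppose a distribution G and continuation values v_1 > v_2 > ... > v_T with stopping probabilities p_t = 1 − G(v_t) satisfy the system ∫_{v_{t+1}}^∞ z dG(z) = (δ^{-1}v_t − (1−p_{t+1})v_{t+1})/β for t = 1,...,T−1. Define a discrete distribution F with T+1 mass points π_0 = E_G[Y | Y ≤ v_T], π_k = E_G[Y | v_{T−k+1} < Y ≤ v_{T−k}] for k = 1,...,T−1, π_T = E_G[Y | v_1 < Y], with probabilities f_0 = 1 − p_T, f_k = p_{T−k+1} − p_{T−k} for k = 1,...,T−1, f_T = p_1 (assuming all these conditioning events have positive G-probability). Then F satisfies π_0 ≤ v_T < π_1 ≤ v_{T−1} < ... ≤ π_{T−1} ≤ v_1 < π_T, satisfies 1 − F(v_t) = p_t for all t, and satisfies the same integral system: ∫_{v_{t+1}}^∞ z dF(z) = ∫_{v_{t+1}}^∞ z dG(z) for all t ∈ {1,...,T−1}. -/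

import Mathlib

open MeasureTheory Set

/-- The cell between consecutive cutoffs: `A_0 = (−∞, v_T]`, `A_k = (v_{T−k+1}, v_{T−k}]`
for `k = 1,...,T−1`, `A_T = (v_1, ∞)`. -/
noncomputable def cell (T : ℕ) (v : ℕ → ℝ) (k : ℕ) : Set ℝ :=
  if k = 0 then Set.Iic (v T)
  else if k = T then Set.Ioi (v 1)
  else Set.Ioc (v (T - k + 1)) (v (T - k))

/-- Conditional mean of the identity over a set. -/
noncomputable def condMean (μ : MeasureTheory.Measure ℝ) (s : Set ℝ) : ℝ :=
  (∫ z in s, z ∂μ) / (μ s).toReal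

/-- The probabilities `f_0 = 1 − p_T`, `f_k = p_{T−k+1} − p_{T−k}`, `f_T = p_1`. -/
noncomputable def weight (T : ℕ) (p : ℕ → ℝ) (k : ℕ) : ℝ :=
  if k = 0 then 1 - p T else if k = T then p 1 else p (T - k + 1) - p (T - k)

lemma aux_condMean_le {μ : Measure ℝ} {s : Set ℝ} {c : ℝ} (hms : MeasurableSet s)
    (h0 : μ s ≠ 0) (hfin : μ s ≠ ⊤) (hint : IntegrableOn (fun z : ℝ => z) s μ)
    (hsub : s ⊆ Iic c) : condMean μ s ≤ c := by
  have hm : 0 < (μ s).toReal := ENNReal.toReal_pos h0 hfin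
  have h1 : ∫ z in s, z ∂μ ≤ ∫ _ in s, c ∂μ :=
    setIntegral_mono_on hint (integrableOn_const hfin) hms
      fun x hx => hsub hx
  rw [setIntegral_const, smul_eq_mul, measureReal_def] at h1
  rw [condMean, div_le_iff₀ hm]
  linarith

lemma aux_condMean_gt {μ : Measure ℝ} {s : Set ℝ} {c : ℝ} (hms : MeasurableSet s)
    (h0 : μ s ≠ 0) (hfin : μ s ≠ ⊤) (hint : IntegrableOn (fun z : ℝ => z) s μ)
    (hsub : s ⊆ Ioi c) : c < condMean μ s := by
  have hm : 0 < (μ s).toReal := ENNReal.toReal_pos h0 hfin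
  have hconst : IntegrableOn (fun _ : ℝ => c) s μ := integrableOn_const hfin
  have hpos : 0 < ∫ z in s, (z - c) ∂μ := by
    rw [setIntegral_pos_iff_support_of_nonneg_ae]
    · have hsupp : s ⊆ Function.support (fun z : ℝ => z - c) :=
        fun x hx => sub_ne_zero.2 (ne_of_gt (hsub hx))
      rw [inter_eq_right.2 hsupp]
      exact h0.bot_lt
    · exact (ae_restrict_iff' hms).2 (ae_of_all _ fun x hx => sub_nonneg.2 (le_of_lt (hsub hx)))
    · exact hint.sub hconst
  have hsplit : ∫ z in s, (z - c) ∂μ = (∫ z in s, z ∂μ) - ∫ _ in s, c ∂μ :=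
    integral_sub hint hconst
  rw [setIntegral_const, smul_eq_mul, measureReal_def] at hsplit
  rw [condMean, lt_div_iff₀ hm]
  linarith

lemma aux_restrict_finset_sum {ι : Type*} (s : Finset ι) (μ : ι → Measure ℝ) (t : Set ℝ) :
    (∑ i ∈ s, μ i).restrict t = ∑ i ∈ s, (μ i).restrict t := by
  classical
  induction s using Finset.induction with
  | empty => simp
  | insert _ _ h ih => rw [Finset.sum_insert h, Finset.sum_insert h, Measure.restrict_add, ih]

/-- finite-support sufficiency: if `G` (law `μ`) with strictly decreasing
cutoffs `v` and stopping probabilities `p_t = 1 − G(v_t)` satisfies the integral system,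
then the discrete distribution `ν` with mass points `π_k = E_G[Y | cell k]` and weights
`f_k` interlaces the cutoffs, matches all stopping probabilities `1 − ν(Iic v_t) = p_t`,
and matches all truncated expectations `∫_{v_{t+1}}^∞ z dν = ∫_{v_{t+1}}^∞ z dG`. -/
theorem stmt_14 (μ : Measure ℝ) [IsProbabilityMeasure μ] (hY : Integrable id μ)
    (δ β : ℝ) (hδ : 0 < δ ∧ δ ≤ 1) (hβ : 0 < β ∧ β ≤ 1)
    (T : ℕ) (hT : 1 ≤ T) (v p : ℕ → ℝ)
    (hv : ∀ t, 1 ≤ t → t < T → v (t + 1) < v t)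
    (hp : ∀ t, 1 ≤ t → t ≤ T → p t = 1 - (μ (Iic (v t))).toReal)
    (hpos : ∀ k ≤ T, 0 < μ (cell T v k))
    (hsys : ∀ t, 1 ≤ t → t < T →
      ∫ z in Ioi (v (t + 1)), z ∂μ = (δ⁻¹ * v t - (1 - p (t + 1)) * v (t + 1)) / β) :
    let π : ℕ → ℝ := fun k => condMean μ (cell T v k)
    let ν : Measure ℝ :=
      ∑ k ∈ Finset.range (T + 1), ENNReal.ofReal (weight T p k) • Measure.dirac (π k)
    (∀ k < T, π k ≤ v (T - k) ∧ v (T - k) < π (k + 1)) ∧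
      (∀ t, 1 ≤ t → t ≤ T → 1 - (ν (Iic (v t))).toReal = p t) ∧
      (∀ t, 1 ≤ t → t < T →
        ∫ z in Ioi (v (t + 1)), z ∂ν = ∫ z in Ioi (v (t + 1)), z ∂μ) := by
  classical
  intro π ν
  have hπdef : ∀ k, π k = condMean μ (cell T v k) := fun _ => rfl
  have hνdef : ν = ∑ k ∈ Finset.range (T + 1),
      ENNReal.ofReal (weight T p k) • Measure.dirac (π k) := rfl
  have hfin : ∀ s : Set ℝ, μ s ≠ ⊤ := fun s => measure_ne_top μ s
  have hid : ∀ s : Set ℝ, IntegrableOn (fun z : ℝ => z) s μ := fun s => hY.integrableOn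
  -- monotonicity of v on [1, T]
  have hvmono : ∀ s t : ℕ, 1 ≤ s → s ≤ t → t ≤ T → v t ≤ v s := by
    intro s t hs hst htT
    induction t with
    | zero => omega
    | succ n ih =>
      rcases Nat.eq_or_lt_of_le hst with h | h
      · rw [h]
      · exact le_trans (hv n (by omega) (by omega)).le (ih (by omega) (by omega))
  have hcellm : ∀ k, MeasurableSet (cell T v k) := by
    intro k
    unfold cell
    split_ifs
    · exact measurableSet_Iic
    · exact measurableSet_Ioi
    · exact measurableSet_Ioc
  -- subset facts
  have hsubIic : ∀ k < T, cell T v k ⊆ Iic (v (T - k)) := by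
    intro k hk
    unfold cell
    rcases Nat.eq_zero_or_pos k with rfl | hk0
    · simp
    · rw [if_neg (by omega), if_neg (by omega)]
      exact Ioc_subset_Iic_self
  have hsubIoi : ∀ k, 1 ≤ k → k ≤ T → cell T v k ⊆ Ioi (v (T - k + 1)) := by
    intro k hk1 hkT
    unfold cell
    rcases eq_or_lt_of_le hkT with rfl | hkT'
    · rw [if_neg (by omega), if_pos rfl, Nat.sub_self]
    · rw [if_neg (by omega), if_neg (by omega)]
      exact Ioc_subset_Ioi_self
  -- weights are the cell masses
  have hw : ∀ k ≤ T, weight T p k = (μ (cell T v k)).toReal := by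
    intro k hk
    by_cases h0 : k = 0
    · subst h0
      unfold weight cell
      rw [if_pos rfl, if_pos rfl, hp T hT le_rfl]
      ring
    by_cases hkT' : k = T
    · subst hkT'
      unfold weight cell
      rw [if_neg h0, if_pos rfl, if_neg h0, if_pos rfl, hp 1 le_rfl hT]
      have hcompl : μ (Ioi (v 1)) = 1 - μ (Iic (v 1)) := by
        rw [← Set.compl_Iic, prob_compl_eq_one_sub measurableSet_Iic]
      rw [hcompl, ENNReal.toReal_sub_of_le prob_le_one ENNReal.one_ne_top, ENNReal.toReal_one]
    · unfold weight cell
      rw [if_neg h0, if_neg hkT', if_neg h0, if_neg hkT']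
      have hlt : v (T - k + 1) < v (T - k) := hv (T - k) (by omega) (by omega)
      have hdiff : μ (Ioc (v (T - k + 1)) (v (T - k)))
          = μ (Iic (v (T - k))) - μ (Iic (v (T - k + 1))) := by
        rw [← Iic_sdiff_Iic,
          measure_diff (Iic_subset_Iic.2 hlt.le) measurableSet_Iic.nullMeasurableSet (hfin _)]
      rw [hdiff, ENNReal.toReal_sub_of_le (measure_mono (Iic_subset_Iic.2 hlt.le)) (hfin _),
        hp (T - k + 1) (by omega) (by omega), hp (T - k) (by omega) (by omega)]
      ring
  have hwnn : ∀ k ≤ T, 0 ≤ weight T p k := by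
    intro k hk
    rw [hw k hk]
    exact ENNReal.toReal_nonneg
  -- interlacing
  have hinter : ∀ k < T, π k ≤ v (T - k) ∧ v (T - k) < π (k + 1) := by
    intro k hk
    constructor
    · exact aux_condMean_le (hcellm k) (hpos k (le_of_lt hk)).ne' (hfin _) (hid _) (hsubIic k hk)
    · have h1 : cell T v (k + 1) ⊆ Ioi (v (T - (k + 1) + 1)) := hsubIoi (k + 1) (by omega) (by omega)
      have heq : T - (k + 1) + 1 = T - k := by omega
      rw [heq] at h1
      exact aux_condMean_gt (hcellm _) (hpos (k + 1) (by omega)).ne' (hfin _) (hid _) h1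
  have hπle : ∀ k t, 1 ≤ t → t ≤ T → k ≤ T - t → π k ≤ v t := by
    intro k t ht1 htT hk
    exact le_trans (hinter k (by omega)).1 (hvmono t (T - k) ht1 (by omega) (by omega))
  have hπgt : ∀ k t, 1 ≤ t → t ≤ T → T - t < k → k ≤ T → v t < π k := by
    intro k t ht1 htT hk1 hkT
    have h := (hinter (k - 1) (by omega)).2
    have hke : k - 1 + 1 = k := by omega
    rw [hke] at h
    exact lt_of_le_of_lt (hvmono (T - (k - 1)) t (by omega) (by omega) htT) h
  -- f_k * π_k is the cell integral
  have hfπ : ∀ k ≤ T, weight T p k * π k = ∫ z in cell T v k, z ∂μ := by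
    intro k hk
    have hm0 : (μ (cell T v k)).toReal ≠ 0 :=
      (ENNReal.toReal_pos (hpos k hk).ne' (hfin _)).ne'
    rw [hπdef k, hw k hk, condMean, mul_comm]
    exact div_mul_cancel₀ _ hm0
  -- telescoping of weights
  have htel : ∀ m, m < T → ∑ k ∈ Finset.range (m + 1), weight T p k = 1 - p (T - m) := by
    intro m hm
    induction m with
    | zero => simp [weight]
    | succ n ih =>
      rw [Finset.sum_range_succ, ih (by omega)]
      have h1 : T - (n + 1) + 1 = T - n := by omega
      unfold weight
      rw [if_neg (by omega : ¬ n + 1 = 0), if_neg (by omega : ¬ n + 1 = T), h1]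
      ring
  refine ⟨hinter, ?_, ?_⟩
  · -- stopping probabilities
    intro t ht1 htT
    have hν : ν (Iic (v t)) = ∑ k ∈ Finset.range (T + 1),
        ENNReal.ofReal (weight T p k) * (Iic (v t)).indicator 1 (π k) := by
      rw [hνdef, Measure.finset_sum_apply]
      refine Finset.sum_congr rfl fun k _ => ?_
      rw [Measure.smul_apply, smul_eq_mul, Measure.dirac_apply' _ measurableSet_Iic]
    have hterm : ∀ k ∈ Finset.range (T + 1),
        ENNReal.ofReal (weight T p k) * (Iic (v t)).indicator 1 (π k)
        = ENNReal.ofReal (if k ≤ T - t then weight T p k else 0) := by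
      intro k hk
      rw [Finset.mem_range] at hk
      by_cases hkle : k ≤ T - t
      · rw [indicator_of_mem (mem_Iic.mpr (hπle k t ht1 htT hkle)) (1 : ℝ → ENNReal), if_pos hkle, Pi.one_apply, mul_one]
      · rw [indicator_of_notMem, if_neg hkle, mul_zero, ENNReal.ofReal_zero]
        simp only [mem_Iic, not_le]
        exact hπgt k t ht1 htT (by omega) (by omega)
    have hsum : ∑ k ∈ Finset.range (T + 1), (if k ≤ T - t then weight T p k else 0)
        = ∑ k ∈ Finset.range (T - t + 1), weight T p k := by
      rw [← Finset.sum_filter]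
      congr 1
      ext x
      simp only [Finset.mem_filter, Finset.mem_range]
      omega
    have hnn : ∀ k ∈ Finset.range (T + 1), 0 ≤ if k ≤ T - t then weight T p k else 0 := by
      intro k hk
      rw [Finset.mem_range] at hk
      split_ifs with h
      · exact hwnn k (by omega)
      · exact le_rfl
    rw [hν, Finset.sum_congr rfl hterm, ← ENNReal.ofReal_sum_of_nonneg hnn,
      ENNReal.toReal_ofReal (Finset.sum_nonneg hnn), hsum, htel (T - t) (by omega)]
    have : T - (T - t) = t := by omega
    rw [this]
    ring
  · -- truncated expectations
    intro t ht1 htT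
    have hdint : ∀ a : ℝ, Integrable (fun z : ℝ => z) (Measure.dirac a) :=
      fun a => (integrable_const a).congr (ae_eq_dirac (fun z : ℝ => z)).symm
    have hintg : ∀ k ∈ Finset.range (T + 1), Integrable (fun z : ℝ => z)
        ((ENNReal.ofReal (weight T p k) • Measure.dirac (π k)).restrict (Ioi (v (t + 1)))) := by
      intro k _
      rw [Measure.restrict_smul]
      exact ((hdint (π k)).restrict).smul_measure ENNReal.ofReal_ne_top
    have h1 : ∫ z in Ioi (v (t + 1)), z ∂ν
        = ∑ k ∈ Finset.range (T + 1),
          (if π k ∈ Ioi (v (t + 1)) then weight T p k * π k else 0) := by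
      rw [hνdef, aux_restrict_finset_sum, integral_finset_sum_measure hintg]
      refine Finset.sum_congr rfl fun k hk => ?_
      rw [Finset.mem_range] at hk
      rw [Measure.restrict_smul, integral_smul_measure,
        ENNReal.toReal_ofReal (hwnn k (by omega)),
        setIntegral_dirac' (f := fun z : ℝ => z) stronglyMeasurable_id (π k) measurableSet_Ioi]
      by_cases hmem : π k ∈ Ioi (v (t + 1))
      · rw [if_pos hmem, if_pos hmem, smul_eq_mul]
      · rw [if_neg hmem, if_neg hmem, smul_zero]
    have h2 : ∀ k ∈ Finset.range (T + 1),
        (if π k ∈ Ioi (v (t + 1)) then weight T p k * π k else 0)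
        = (if T - t ≤ k then weight T p k * π k else 0) := by
      intro k hk
      rw [Finset.mem_range] at hk
      by_cases hc : T - t ≤ k
      · rw [if_pos, if_pos hc]
        exact hπgt k (t + 1) (by omega) (by omega) (by omega) (by omega)
      · rw [if_neg, if_neg hc]
        simp only [mem_Ioi, not_lt]
        exact hπle k (t + 1) (by omega) (by omega) (by omega)
    have h3 : ∑ k ∈ Finset.range (T + 1), (if T - t ≤ k then weight T p k * π k else 0)
        = ∑ k ∈ Finset.Icc (T - t) T, weight T p k * π k := by
      rw [← Finset.sum_filter]
      congr 1
      ext x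
      simp only [Finset.mem_filter, Finset.mem_range, Finset.mem_Icc]
      omega
    have h4 : ∀ j, j < T → ∑ k ∈ Finset.Icc (T - j) T, weight T p k * π k
        = ∫ z in Ioi (v (j + 1)), z ∂μ := by
      intro j
      induction j with
      | zero =>
        intro _
        rw [Nat.sub_zero, Finset.Icc_self, Finset.sum_singleton, hfπ T le_rfl]
        have : cell T v T = Ioi (v 1) := by
          unfold cell
          rw [if_neg (by omega), if_pos rfl]
        rw [this]
      | succ n ih =>
        intro hn
        have hins : Finset.Icc (T - (n + 1)) T = insert (T - (n + 1)) (Finset.Icc (T - n) T) := by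
          ext x
          simp only [Finset.mem_Icc, Finset.mem_insert]
          omega
        have hnotmem : T - (n + 1) ∉ Finset.Icc (T - n) T := by
          simp only [Finset.mem_Icc]
          omega
        rw [hins, Finset.sum_insert hnotmem, ih (by omega), hfπ (T - (n + 1)) (by omega)]
        have hc : cell T v (T - (n + 1)) = Ioc (v (n + 2)) (v (n + 1)) := by
          unfold cell
          rw [if_neg (by omega), if_neg (by omega)]
          have e1 : T - (T - (n + 1)) + 1 = n + 2 := by omega
          have e2 : T - (T - (n + 1)) = n + 1 := by omega
          rw [e1, e2]
        rw [hc, ← setIntegral_union Ioc_disjoint_Ioi_same measurableSet_Ioi (hid _) (hid _),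
          Ioc_union_Ioi_eq_Ioi (hv (n + 1) (by omega) (by omega)).le]
    rw [h1, Finset.sum_congr rfl h2, h3, h4 t htT]
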